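/- arXiv:1304.6628 — 4 statements merged into one kernel-verified Lean document; each statement's English description precedes it below -/
import Mathlib

section
/- Let X be a countably compact topological space and (Y,d) a metric space. Then the graph topology on C(X,Y) coincides with the topology of uniform convergence; that is, for every f ∈ C(X,Y) and every strictly positive lower semicontinuous ε : X → ℝ there exists c > 0 with {g : ∀ x, d(f(x),g(x)) < c} ⊆ B(f,ε), and conversely every uniform ball B(f,c) with constant c > 0 is of the form B(f,ε) with ε lower semicontinuous and strictly positive. -/
/-- A space is countably compact if every countable open cover has a finite subcover. -/
def CountablyCompact (X : Type*) [TopologicalSpace X] : Prop :=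
  ∀ U : ℕ → Set X, (∀ n, IsOpen (U n)) → (⋃ n, U n) = Set.univ →
    ∃ s : Finset ℕ, (⋃ n ∈ s, U n) = Set.univ

/-- The basic set `B(f,ε)` of the graph topology. -/
def gball {X Y : Type*} [TopologicalSpace X] [MetricSpace Y]
    (f : C(X, Y)) (ε : X → ℝ) : Set C(X, Y) :=
  {g | ∀ x, dist (f x) (g x) < ε x}

theorem stmt4 {X Y : Type*} [TopologicalSpace X] [Nonempty X] [MetricSpace Y]
    (hX : CountablyCompact X) :
    (∀ (f : C(X, Y)) (ε : X → ℝ), LowerSemicontinuous ε → (∀ x, 0 < ε x) →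
      ∃ c > 0, {g : C(X, Y) | ∀ x, dist (f x) (g x) < c} ⊆ gball f ε) ∧
    (∀ (f : C(X, Y)) (c : ℝ), 0 < c →
      ∃ ε : X → ℝ, LowerSemicontinuous ε ∧ (∀ x, 0 < ε x) ∧
        gball f ε = {g : C(X, Y) | ∀ x, dist (f x) (g x) < c}) := by
  constructor
  · intro f ε hlsc hpos
    set U : ℕ → Set X := fun n => {x | (1 : ℝ) / (n + 1) < ε x} with hU
    have hopen : ∀ n, IsOpen (U n) := fun n => hlsc.isOpen_preimage _
    have hcover : (⋃ n, U n) = Set.univ := by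
      ext x
      simp only [Set.mem_iUnion, Set.mem_univ, iff_true]
      obtain ⟨n, hn⟩ := exists_nat_one_div_lt (hpos x)
      exact ⟨n, hn⟩
    obtain ⟨s, hs⟩ := hX U hopen hcover
    have hsne : s.Nonempty := by
      by_contra h
      rw [Finset.not_nonempty_iff_eq_empty] at h
      subst h
      simp at hs
      exact (Set.eq_empty_iff_forall_notMem.mp hs.symm) (Classical.arbitrary X) trivial
    obtain ⟨N, hNs, hN⟩ := s.exists_max_image id hsne
    refine ⟨1 / (N + 1), by positivity, ?_⟩
    intro g hg x
    have hx : x ∈ ⋃ n ∈ s, U n := hs ▸ Set.mem_univ x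
    obtain ⟨n, hns, hxn⟩ := Set.mem_iUnion₂.mp hx
    have h1 : (1 : ℝ) / (N + 1) ≤ 1 / (n + 1) := by
      apply one_div_le_one_div_of_le (by positivity)
      have := hN n hns
      exact_mod_cast add_le_add_left (Nat.cast_le.mpr this) 1
    exact lt_trans (lt_of_lt_of_le (hg x) h1) hxn
  · intro f c hc
    exact ⟨fun _ => c, lowerSemicontinuous_const, fun _ => hc, rfl⟩
end

section
/- If X is a Tychonoff space such that C(X) with the fine topology is hereditarily Baire, then X is pseudocompact. -/
open Set TopologicalSpace

section helpers
variable {X : Type*} [TopologicalSpace X]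

def fineGen (X : Type*) [TopologicalSpace X] : Set (Set C(X, ℝ)) :=
  {S | ∃ (f : C(X, ℝ)) (ε : C(X, ℝ)), (∀ x, 0 < ε x) ∧
    S = {g : C(X, ℝ) | ∀ x, |f x - g x| < ε x}}

lemma weight_fn (f : C(X, ℝ)) (x : ℕ → X)
    (hx : ∀ n : ℕ, (n : ℝ) ≤ f (x n)) (a : ℕ → ℝ) (ha : ∀ n, 0 < a n) :
    ∃ ε : C(X, ℝ), (∀ y, 0 < ε y) ∧ ∀ n, ε (x n) ≤ a n := by
  set t : ℕ → ℝ := fun n => f (x n) with ht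
  set c : ℕ → ℝ := fun n => min (a n) 1 with hc
  have hc0 : ∀ n, 0 < c n := fun n => lt_min (ha n) one_pos
  set ψ : ℝ → ℝ := fun s => ⨅ n, (c n + |s - t n|) with hψ
  have hψs : ∀ s, ψ s = ⨅ n, (c n + |s - t n|) := fun _ => rfl
  have hbdd : ∀ s : ℝ, BddBelow (range fun n => c n + |s - t n|) := by
    intro s
    refine ⟨0, ?_⟩
    rintro y ⟨n, rfl⟩
    exact add_nonneg (hc0 n).le (abs_nonneg _)
  have hle : ∀ s u : ℝ, ψ s ≤ ψ u + |s - u| := by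
    intro s u
    rw [hψs u, ← sub_le_iff_le_add]
    apply le_ciInf
    intro n
    rw [sub_le_iff_le_add, hψs s]
    calc ⨅ n, (c n + |s - t n|) ≤ c n + |s - t n| := ciInf_le (hbdd s) n
      _ ≤ c n + (|u - t n| + |s - u|) := by
          gcongr
          calc |s - t n| = |(u - t n) + (s - u)| := by ring_nf
            _ ≤ |u - t n| + |s - u| := abs_add_le _ _
      _ = c n + |u - t n| + |s - u| := by ring
  have hlip : LipschitzWith 1 ψ := by
    rw [lipschitzWith_iff_dist_le_mul]
    intro s u
    rw [Real.dist_eq, Real.dist_eq, NNReal.coe_one, one_mul, abs_sub_le_iff]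
    constructor
    · linarith [hle s u]
    · linarith [hle u s, abs_sub_comm s u]
  have hpos : ∀ s : ℝ, 0 < ψ s := by
    intro s
    set N : ℕ := ⌈s⌉₊ + 1 with hN
    have hNpos : 0 < N := Nat.succ_pos _
    set b : ℝ := min 1 (Finset.inf' (Finset.range N) (by simp [hNpos]) fun n => c n + |s - t n|)
      with hb
    have hbpos : 0 < b := by
      apply lt_min one_pos
      rw [Finset.lt_inf'_iff]
      intro n _
      exact add_pos_of_pos_of_nonneg (hc0 n) (abs_nonneg _)
    rw [hψs s]
    refine lt_of_lt_of_le hbpos (le_ciInf ?_)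
    intro n
    by_cases hn : n < N
    · exact le_trans (min_le_right _ _)
        (Finset.inf'_le _ (Finset.mem_range.mpr hn))
    · rw [not_lt] at hn
      have h1 : (1 : ℝ) ≤ |s - t n| := by
        have h2 : s ≤ (⌈s⌉₊ : ℝ) := Nat.le_ceil s
        have h3 : (N : ℝ) ≤ n := by exact_mod_cast hn
        have h4 : (n : ℝ) ≤ t n := hx n
        push_cast [hN] at h3
        rw [abs_sub_comm, abs_of_nonneg (by linarith)]
        linarith
      calc b ≤ 1 := min_le_left _ _
        _ ≤ c n + |s - t n| := by linarith [(hc0 n).le]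
  refine ⟨(⟨ψ, hlip.continuous⟩ : C(ℝ, ℝ)).comp f, fun y => hpos _, fun n => ?_⟩
  show ψ (f (x n)) ≤ a n
  rw [hψs]
  calc ⨅ m, (c m + |t n - t m|) ≤ c n + |t n - t n| := ciInf_le (hbdd _) n
    _ = c n := by simp
    _ ≤ a n := min_le_left _ _

lemma closed_image [T1Space X] (f : C(X, ℝ)) (x : ℕ → X)
    (hgap : ∀ m n : ℕ, m ≠ n → 1 ≤ |f (x m) - f (x n)|) (I : Set ℕ) :
    IsClosed (x '' I) := by
  rw [← isOpen_compl_iff, isOpen_iff_forall_mem_open]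
  intro y hy
  by_cases hJ : ∃ n ∈ I, |f (x n) - f y| < 1/2
  · obtain ⟨n₀, hn₀I, hn₀⟩ := hJ
    refine ⟨f ⁻¹' (Metric.ball (f y) (1/2)) ∩ {x n₀}ᶜ, ?_, ?_, ?_⟩
    · rintro z ⟨hz1, hz2⟩ ⟨n, hnI, rfl⟩
      rw [mem_preimage, Metric.mem_ball, Real.dist_eq] at hz1
      have hne : n = n₀ := by
        by_contra hne
        have hg := hgap n n₀ hne
        have h2 : |f (x n) - f (x n₀)| < 1 := by
          calc |f (x n) - f (x n₀)| = |(f (x n) - f y) - (f (x n₀) - f y)| := by ring_nf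
            _ ≤ |f (x n) - f y| + |f (x n₀) - f y| := abs_sub _ _
            _ < 1/2 + 1/2 := add_lt_add hz1 hn₀
            _ = 1 := by norm_num
        linarith
      exact hz2 (by rw [hne]; rfl)
    · exact IsOpen.inter (f.continuous.isOpen_preimage _ Metric.isOpen_ball)
        isOpen_compl_singleton
    · refine ⟨by simp [Real.dist_eq], ?_⟩
      simp only [mem_compl_iff, mem_singleton_iff]
      intro hcon
      exact hy ⟨n₀, hn₀I, hcon.symm⟩
  · push_neg at hJ
    refine ⟨f ⁻¹' (Metric.ball (f y) (1/2)), ?_, ?_, ?_⟩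
    · rintro z hz ⟨n, hnI, rfl⟩
      rw [mem_preimage, Metric.mem_ball, Real.dist_eq] at hz
      exact absurd hz (not_lt.mpr (hJ n hnI))
    · exact f.continuous.isOpen_preimage _ Metric.isOpen_ball
    · simp [Real.dist_eq]

lemma fine_basic_nbhd {U : Set C(X, ℝ)} (hU : GenerateOpen (fineGen X) U) :
    ∀ g ∈ U, ∃ δ : C(X, ℝ), (∀ x, 0 < δ x) ∧
      {g' : C(X, ℝ) | ∀ x, |g x - g' x| < δ x} ⊆ U := by
  induction hU with
  | basic S hS =>
    intro g hg
    obtain ⟨f, ε, hε, rfl⟩ := hS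
    refine ⟨ε - |f - g|, fun x => ?_, fun g' hg' x => ?_⟩
    · have := hg x
      simp only [ContinuousMap.sub_apply, ContinuousMap.abs_apply, ContinuousMap.sub_apply]
      linarith
    · have h1 := hg' x
      simp only [mem_setOf_eq, ContinuousMap.sub_apply, ContinuousMap.abs_apply] at h1
      have h2 := hg x
      calc |f x - g' x| ≤ |f x - g x| + |g x - g' x| := by
            have := abs_add_le (f x - g x) (g x - g' x); ring_nf at this ⊢; linarith
        _ < ε x := by linarith
  | univ => exact fun g _ => ⟨1, fun x => one_pos, subset_univ _⟩
  | inter S T _ _ ihS ihT =>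
    rintro g ⟨hgS, hgT⟩
    obtain ⟨δ₁, hδ₁, hsub₁⟩ := ihS g hgS
    obtain ⟨δ₂, hδ₂, hsub₂⟩ := ihT g hgT
    refine ⟨δ₁ ⊓ δ₂, fun x => lt_min (hδ₁ x) (hδ₂ x), fun g' hg' => ?_⟩
    refine ⟨hsub₁ fun x => ?_, hsub₂ fun x => ?_⟩
    · exact lt_of_lt_of_le (hg' x) (min_le_left _ _)
    · exact lt_of_lt_of_le (hg' x) (min_le_right _ _)
  | sUnion 𝒮 _ ih =>
    rintro g ⟨S, hS𝒮, hgS⟩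
    obtain ⟨δ, hδ, hsub⟩ := ih S hS𝒮 g hgS
    exact ⟨δ, hδ, hsub.trans (subset_sUnion_of_mem hS𝒮)⟩

end helpers

/-- A space is pseudocompact if every continuous real-valued function on it is bounded. -/
def Pseudocompact (X : Type*) [TopologicalSpace X] : Prop :=
  ∀ f : C(X, ℝ), ∃ M : ℝ, ∀ x, |f x| ≤ M

/-- The fine topology on `C(X,ℝ)`, generated by the sets `B(f,ε)` with `ε` strictly
positive and continuous. -/
def fineTop (X : Type*) [TopologicalSpace X] : TopologicalSpace C(X, ℝ) :=
  TopologicalSpace.generateFrom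
    {S | ∃ (f : C(X, ℝ)) (ε : C(X, ℝ)), (∀ x, 0 < ε x) ∧
      S = {g : C(X, ℝ) | ∀ x, |f x - g x| < ε x}}

theorem stmt10 {X : Type*} [TopologicalSpace X] [T1Space X] [CompletelyRegularSpace X]
    (h : ∀ F : Set C(X, ℝ), F.Nonempty → @IsClosed C(X, ℝ) (fineTop X) F →
      @BaireSpace F (TopologicalSpace.induced Subtype.val (fineTop X))) :
    Pseudocompact X := by
  by_contra hp
  rw [Pseudocompact] at hp
  push_neg at hp
  obtain ⟨f₀, hunb⟩ := hp
  set f : C(X, ℝ) := |f₀| with hf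
  have hunb' : ∀ M : ℝ, ∃ y : X, M < f y := by
    intro M
    obtain ⟨y, hy⟩ := hunb M
    exact ⟨y, hy⟩
  -- build the sequence of points
  have hstep : ∀ y : X, ∃ z : X, f y + 1 < f z := fun y => hunb' (f y + 1)
  choose nxt hnxt using hstep
  obtain ⟨y₀, hy₀⟩ := hunb' 0
  set x : ℕ → X := fun n => nxt^[n] y₀ with hxdef
  have hsucc : ∀ n : ℕ, f (x n) + 1 < f (x (n + 1)) := by
    intro n
    have : x (n + 1) = nxt (x n) := Function.iterate_succ_apply' nxt n y₀
    rw [this]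
    exact hnxt (x n)
  have hxn : ∀ n : ℕ, (n : ℝ) ≤ f (x n) := by
    intro n
    induction n with
    | zero => exact_mod_cast hy₀.le
    | succ k ih => push_cast; linarith [hsucc k]
  have hmono : ∀ m n : ℕ, m < n → f (x m) + 1 ≤ f (x n) := by
    intro m n hmn
    induction n with
    | zero => omega
    | succ k ih =>
      rcases Nat.lt_succ_iff_lt_or_eq.mp hmn with hk | hk
      · linarith [ih hk, hsucc k]
      · subst hk; linarith [hsucc m]
  have hgap : ∀ m n : ℕ, m ≠ n → 1 ≤ |f (x m) - f (x n)| := by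
    intro m n hmn
    rcases lt_or_gt_of_ne hmn with hlt | hlt
    · rw [abs_sub_comm, abs_of_nonneg (by linarith [hmono m n hlt])]
      linarith [hmono m n hlt]
    · rw [abs_of_nonneg (by linarith [hmono n m hlt])]
      linarith [hmono n m hlt]
  -- the closed non-Baire set
  letI : TopologicalSpace C(X, ℝ) := fineTop X
  set F : Set C(X, ℝ) := {g | {n : ℕ | g (x n) ≠ 0}.Finite} with hF
  have hFgen : fineTop X = TopologicalSpace.generateFrom (fineGen X) := rfl
  have hbasic_open : ∀ (g₀ ε : C(X, ℝ)), (∀ y, 0 < ε y) →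
      IsOpen {g : C(X, ℝ) | ∀ y, |g₀ y - g y| < ε y} := by
    intro g₀ ε hε
    show GenerateOpen (fineGen X) _
    exact .basic _ ⟨g₀, ε, hε, rfl⟩
  have hFclosed : IsClosed F := by
    rw [← isOpen_compl_iff, isOpen_iff_forall_mem_open]
    intro g₁ hg₁
    set a : ℕ → ℝ := fun n => if g₁ (x n) = 0 then 1 else |g₁ (x n)| with ha
    have hapos : ∀ n, 0 < a n := by
      intro n
      show 0 < if g₁ (x n) = 0 then 1 else |g₁ (x n)|
      split
      · exact one_pos
      · next hne => exact abs_pos.mpr hne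
    obtain ⟨ε, hεpos, hεle⟩ := weight_fn f x hxn a hapos
    refine ⟨{g : C(X, ℝ) | ∀ y, |g₁ y - g y| < ε y}, ?_, hbasic_open g₁ ε hεpos,
      fun y => by simpa using hεpos y⟩
    intro g₂ hg₂ hg₂F
    apply hg₁
    refine Finite.subset hg₂F ?_
    intro n hn
    simp only [mem_setOf_eq] at hn ⊢
    intro hzero
    have h1 : |g₁ (x n) - g₂ (x n)| < ε (x n) := hg₂ (x n)
    have h2 : ε (x n) ≤ |g₁ (x n)| := by
      have h3 : ε (x n) ≤ if g₁ (x n) = 0 then 1 else |g₁ (x n)| := hεle n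
      rwa [if_neg hn] at h3
    rw [hzero, sub_zero] at h1
    linarith
  have hF0 : (0 : C(X, ℝ)) ∈ F := by
    simp [hF]
  haveI hBaire : BaireSpace F := h F ⟨0, hF0⟩ hFclosed
  haveI : Nonempty F := ⟨⟨0, hF0⟩⟩
  -- the closed pieces
  set A : ℕ → Set F := fun k => {g | ∀ n, k ≤ n → (g : C(X, ℝ)) (x n) = 0} with hA
  have hAclosed : ∀ k, IsClosed (A k) := by
    intro k
    have : A k = Subtype.val ⁻¹' {g : C(X, ℝ) | ∀ n, k ≤ n → g (x n) = 0} := rfl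
    rw [this]
    refine IsClosed.preimage continuous_subtype_val ?_
    rw [← isOpen_compl_iff, isOpen_iff_forall_mem_open]
    intro g₁ hg₁
    simp only [mem_compl_iff, mem_setOf_eq, not_forall] at hg₁
    obtain ⟨n₀, hn₀k, hn₀⟩ := hg₁
    set c : ℝ := |g₁ (x n₀)| with hc
    have hcpos : 0 < c := abs_pos.mpr hn₀
    refine ⟨{g : C(X, ℝ) | ∀ y, |g₁ y - g y| < (ContinuousMap.const X c) y}, ?_,
      hbasic_open g₁ _ (fun y => hcpos), fun y => by simpa using hcpos⟩
    intro g₂ hg₂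
    simp only [mem_compl_iff, mem_setOf_eq, not_forall]
    refine ⟨n₀, hn₀k, ?_⟩
    intro hzero
    have h1 := hg₂ (x n₀)
    simp only [ContinuousMap.const_apply, hzero, sub_zero] at h1
    exact absurd h1 (lt_irrefl c)
  have hAcover : ⋃ k, A k = univ := by
    ext g
    simp only [mem_iUnion, mem_univ, iff_true]
    have hfin : {n : ℕ | (g : C(X, ℝ)) (x n) ≠ 0}.Finite := g.2
    obtain ⟨N, hN⟩ := hfin.bddAbove
    refine ⟨N + 1, fun n hn => ?_⟩
    by_contra hne
    have : n ≤ N := hN hne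
    omega
  have hAint : ∀ k, interior (A k) = ∅ := by
    intro k
    rw [eq_empty_iff_forall_notMem]
    rintro ⟨g, hgF⟩ hint
    rw [mem_interior] at hint
    obtain ⟨V, hVsub, hVopen, hgV⟩ := hint
    rw [isOpen_induced_iff] at hVopen
    obtain ⟨U, hUopen, rfl⟩ := hVopen
    have hUgen : GenerateOpen (fineGen X) U := hUopen
    obtain ⟨δ, hδpos, hδsub⟩ := fine_basic_nbhd hUgen g hgV
    -- pick m
    obtain ⟨N, hN⟩ := (hgF : {n : ℕ | g (x n) ≠ 0}.Finite).bddAbove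
    set m : ℕ := max k (N + 1) with hm
    have hgm : g (x m) = 0 := by
      by_contra hne
      have : m ≤ N := hN hne
      omega
    -- bump function
    set c : ℝ := δ (x m) / 2 with hcdef
    have hcpos : 0 < c := by
      have := hδpos (x m)
      rw [hcdef]
      linarith
    set K : Set X := (x '' {n | n ≠ m}) ∪ {y | δ y ≤ c} with hK
    have hKclosed : IsClosed K :=
      (closed_image f x hgap _).union (isClosed_le δ.continuous continuous_const)
    have hxmK : x m ∉ K := by
      rintro (⟨n, hn, hxn'⟩ | hle)
      · have hg1 := hgap n m hn
        rw [hxn', sub_self, abs_zero] at hg1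
        linarith
      · simp only [mem_setOf_eq] at hle
        have := hδpos (x m)
        rw [hcdef] at hle
        linarith
    obtain ⟨φ₀, hφ₀cont, hφ₀x, hφ₀K⟩ :=
      CompletelyRegularSpace.completely_regular (x m) K hKclosed hxmK
    set φ : C(X, ℝ) := ⟨fun y => 1 - (φ₀ y : ℝ),
      (continuous_const.sub (continuous_subtype_val.comp hφ₀cont))⟩ with hφ
    have hφm : φ (x m) = 1 := by simp [hφ, hφ₀x]
    have hφK : ∀ y ∈ K, φ y = 0 := by
      intro y hy
      have : φ₀ y = 1 := hφ₀K hy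
      simp [hφ, this]
    have hφ01 : ∀ y, 0 ≤ φ y ∧ φ y ≤ 1 := by
      intro y
      have h1 := (φ₀ y).2.1
      have h2 := (φ₀ y).2.2
      have heq : φ y = 1 - (φ₀ y : ℝ) := rfl
      rw [heq]
      constructor
      · linarith
      · linarith
    set hfun : C(X, ℝ) := g + c • φ with hhfun
    have hfunB : ∀ y, |g y - hfun y| < δ y := by
      intro y
      have : g y - hfun y = -(c * φ y) := by
        simp [hhfun]
        try ring
      rw [this, abs_neg]
      by_cases hy : y ∈ K
      · rw [hφK y hy, mul_zero, abs_zero]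
        exact hδpos y
      · have hlt : c < δ y := by
          by_contra hge
          exact hy (Or.inr (by simpa using not_lt.mp hge))
        have h0 := (hφ01 y).1
        have h1 := (hφ01 y).2
        rw [abs_of_nonneg (by positivity)]
        nlinarith
    have hfunF : hfun ∈ F := by
      refine Finite.subset (hgF.union (finite_singleton m)) ?_
      intro n hn
      simp only [mem_setOf_eq, mem_union, mem_singleton_iff] at hn ⊢
      by_cases hnm : n = m
      · exact Or.inr hnm
      · left
        intro hzero
        apply hn
        have hφn : φ (x n) = 0 := hφK _ (Or.inl ⟨n, hnm, rfl⟩)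
        simp [hhfun, hφn, hzero]
    have hmem : (⟨hfun, hfunF⟩ : F) ∈ Subtype.val ⁻¹' U := hδsub hfunB
    have hAk := hVsub hmem
    have : hfun (x m) = 0 := hAk m (le_max_left _ _)
    have : hfun (x m) = c := by
      simp [hhfun, hφm, hgm]
    linarith
  obtain ⟨k, hk⟩ := nonempty_interior_of_iUnion_of_closed hAclosed hAcover
  rw [hAint k] at hk
  exact hk.ne_empty rfl
end

section
/- If X is a pseudocompact Tychonoff space, then the fine topology on C(X) coincides with the topology of uniform convergence and is completely metrizable. -/
namespace Stmt11Aux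

open Filter Topology

variable {X : Type*} [TopologicalSpace X]

/-- The truncated sup distance. -/
noncomputable def d (f g : C(X, ℝ)) : ℝ := ⨆ x, min 1 |f x - g x|

lemma term_nonneg (f g : C(X, ℝ)) (x : X) : 0 ≤ min 1 |f x - g x| :=
  le_min zero_le_one (abs_nonneg _)

lemma bdd (f g : C(X, ℝ)) : BddAbove (Set.range fun x => min 1 |f x - g x|) := by
  refine ⟨1, ?_⟩
  rintro _ ⟨x, rfl⟩
  exact min_le_left _ _

lemma d_nonneg (f g : C(X, ℝ)) : 0 ≤ d f g :=
  Real.iSup_nonneg (term_nonneg f g)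

lemma le_d (f g : C(X, ℝ)) (x : X) : min 1 |f x - g x| ≤ d f g :=
  le_ciSup (bdd f g) x

lemma d_le (f g : C(X, ℝ)) {a : ℝ} (h0 : 0 ≤ a) (h : ∀ x, min 1 |f x - g x| ≤ a) :
    d f g ≤ a :=
  Real.iSup_le h h0

lemma min_one_add {a b : ℝ} (ha : 0 ≤ a) (hb : 0 ≤ b) :
    min 1 (a + b) ≤ min 1 a + min 1 b := by
  rcases le_total 1 a with h | h
  · have h1 : min 1 a = 1 := min_eq_left h
    have := le_min zero_le_one hb
    have := min_le_left 1 (a + b)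
    linarith
  · rcases le_total 1 b with h' | h'
    · have h1 : min 1 b = 1 := min_eq_left h'
      have := le_min zero_le_one ha
      have := min_le_left 1 (a + b)
      linarith
    · have h1 : min 1 a = a := min_eq_right h
      have h2 : min 1 b = b := min_eq_right h'
      have := min_le_right 1 (a + b)
      linarith

lemma lt_of_min_lt {t r : ℝ} (hr : r ≤ 1) (h : min 1 t < r) : t < r := by
  rcases min_cases 1 t with ⟨h1, h2⟩ | ⟨h1, h2⟩ <;> linarith

/-- The metric of uniform convergence (truncated at 1). -/
noncomputable def m : MetricSpace C(X, ℝ) where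
  dist := d
  dist_self f := by
    refine le_antisymm (Real.iSup_le (fun x => by simp) le_rfl) (d_nonneg f f)
  dist_comm f g := by
    unfold d
    simp only [abs_sub_comm]
  dist_triangle f g h := by
    refine d_le f h (add_nonneg (d_nonneg f g) (d_nonneg g h)) fun x => ?_
    calc min 1 |f x - h x| ≤ min 1 (|f x - g x| + |g x - h x|) :=
          min_le_min le_rfl (abs_sub_le _ _ _)
      _ ≤ min 1 |f x - g x| + min 1 |g x - h x| :=
          min_one_add (abs_nonneg _) (abs_nonneg _)
      _ ≤ d f g + d g h := add_le_add (le_d f g x) (le_d g h x)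
  eq_of_dist_eq_zero := by
    intro f g hfg
    ext x
    by_contra hne
    have h1 : 0 < |f x - g x| := abs_pos.mpr (sub_ne_zero.mpr hne)
    have h2 : 0 < min 1 |f x - g x| := lt_min one_pos h1
    have h3 := le_d f g x
    have hz : d f g = 0 := hfg
    rw [hz] at h3
    linarith

lemma pos_inf (hX : Pseudocompact X) (h : C(X, ℝ)) (hp : ∀ x, 0 < h x) :
    ∃ δ > 0, ∀ x, δ ≤ h x := by
  rcases isEmpty_or_nonempty X with hE | hN
  · exact ⟨1, one_pos, fun x => (hE.false x).elim⟩
  · obtain ⟨M, hM⟩ := hX ⟨fun x => (h x)⁻¹, h.continuous.inv₀ (fun x => (hp x).ne')⟩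
    obtain ⟨x₀⟩ := hN
    have hM0 : 0 < M := lt_of_lt_of_le (inv_pos.mpr (hp x₀))
      (le_trans (le_abs_self _) (hM x₀))
    refine ⟨M⁻¹, inv_pos.mpr hM0, fun x => ?_⟩
    have hle : (h x)⁻¹ ≤ M := le_trans (le_abs_self _) (hM x)
    have hx := hp x
    rw [inv_le_comm₀ hM0 hx]
    exact hle

end Stmt11Aux

theorem stmt11 {X : Type*} [TopologicalSpace X] [T1Space X] [CompletelyRegularSpace X]
    (hX : Pseudocompact X) :
    ∃ m : MetricSpace C(X, ℝ),
      (∀ f g : C(X, ℝ),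
        @dist _ m.toPseudoMetricSpace.toDist f g = ⨆ x, min 1 |f x - g x|) ∧
      @UniformSpace.toTopologicalSpace _ m.toPseudoMetricSpace.toUniformSpace = fineTop X ∧
      @CompleteSpace C(X, ℝ) m.toPseudoMetricSpace.toUniformSpace := by
  classical
  open Stmt11Aux Filter Topology in
  letI m' : MetricSpace C(X, ℝ) := Stmt11Aux.m
  refine ⟨m', fun f g => rfl, ?_, ?_⟩
  · -- topology = fineTop
    refine le_antisymm ?_ ?_
    · -- metric topology ≤ fineTop : every basic fine set is metric open
      refine le_generateFrom ?_
      rintro S ⟨f, ε, hε, rfl⟩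
      rw [Metric.isOpen_iff]
      intro g hg
      set h : C(X, ℝ) := ⟨fun x => ε x - |f x - g x|,
        ε.continuous.sub ((f.continuous.sub g.continuous).abs)⟩ with hh
      have hp : ∀ x, 0 < h x := fun x => sub_pos.mpr (hg x)
      obtain ⟨δ, hδ, hδle⟩ := Stmt11Aux.pos_inf hX h hp
      refine ⟨min δ 1, lt_min hδ one_pos, fun g' hg' x => ?_⟩
      rw [Metric.mem_ball] at hg'
      have h1 : min 1 |g x - g' x| ≤ dist g' g := by
        rw [dist_comm]; exact Stmt11Aux.le_d g g' x
      have h2 : min 1 |g x - g' x| < min δ 1 := lt_of_le_of_lt h1 hg'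
      have h3 : |g x - g' x| < min δ 1 :=
        Stmt11Aux.lt_of_min_lt (min_le_right _ _) h2
      have h4 : |g x - g' x| < δ := lt_of_lt_of_le h3 (min_le_left _ _)
      have h5 : δ ≤ ε x - |f x - g x| := hδle x
      have h6 : |f x - g' x| ≤ |f x - g x| + |g x - g' x| := abs_sub_le _ _ _
      linarith
    · -- fineTop ≤ metric topology : every metric open set is fine open
      intro U hU
      have key : U = ⋃₀ {T | (T ∈ {S | ∃ (f : C(X, ℝ)) (ε : C(X, ℝ)), (∀ x, 0 < ε x) ∧
          S = {g : C(X, ℝ) | ∀ x, |f x - g x| < ε x}}) ∧ T ⊆ U} := by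
        apply Set.Subset.antisymm
        · intro g hg
          rw [Metric.isOpen_iff] at hU
          obtain ⟨r, hr, hball⟩ := hU g hg
          set c := min 1 r with hc
          have hc0 : 0 < c := lt_min one_pos hr
          refine ⟨{g' : C(X, ℝ) | ∀ x, |g x - g' x| < c / 2}, ⟨⟨g,
            ContinuousMap.const X (c / 2), fun _ => half_pos hc0, rfl⟩, ?_⟩, fun x => by simpa using half_pos hc0⟩
          intro g' hg'
          apply hball
          rw [Metric.mem_ball, dist_comm]
          have : d g g' ≤ c / 2 := Stmt11Aux.d_le g g' (by positivity) fun x =>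
            le_trans (min_le_right _ _) (hg' x).le
          calc dist g g' ≤ c / 2 := this
            _ < c := by linarith
            _ ≤ r := min_le_right _ _
        · rintro g ⟨T, ⟨-, hTU⟩, hgT⟩
          exact hTU hgT
      rw [key]
      exact TopologicalSpace.GenerateOpen.sUnion _ fun T hT =>
        TopologicalSpace.GenerateOpen.basic T hT.1
  · -- completeness
    refine Metric.complete_of_cauchySeq_tendsto ?_
    intro u hu
    have key : ∀ ε > (0:ℝ), ∃ N, ∀ m ≥ N, ∀ n ≥ N, ∀ x, |u m x - u n x| < ε := by
      intro ε hε
      rw [Metric.cauchySeq_iff] at hu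
      obtain ⟨N, hN⟩ := hu (min ε 1) (lt_min hε one_pos)
      refine ⟨N, fun m hm n hn x => ?_⟩
      have h1 : min 1 |u m x - u n x| ≤ dist (u m) (u n) := Stmt11Aux.le_d _ _ x
      have h2 : min 1 |u m x - u n x| < min ε 1 := lt_of_le_of_lt h1 (hN m hm n hn)
      exact lt_of_lt_of_le
        (Stmt11Aux.lt_of_min_lt (min_le_right _ _) h2) (min_le_left _ _)
    -- pointwise limit
    have hptc : ∀ x, ∃ y : ℝ, Filter.Tendsto (fun n => u n x) Filter.atTop (nhds y) := by
      intro x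
      apply cauchySeq_tendsto_of_complete
      rw [Metric.cauchySeq_iff]
      intro ε hε
      obtain ⟨N, hN⟩ := key ε hε
      exact ⟨N, fun m hm n hn => by rw [Real.dist_eq]; exact hN m hm n hn x⟩
    choose f₀ hf₀ using hptc
    -- uniform estimate
    have est : ∀ ε > (0:ℝ), ∃ N, ∀ n ≥ N, ∀ x, |u n x - f₀ x| ≤ ε := by
      intro ε hε
      obtain ⟨N, hN⟩ := key ε hε
      refine ⟨N, fun n hn x => ?_⟩
      have hT : Filter.Tendsto (fun m => |u n x - u m x|) Filter.atTop
          (nhds |u n x - f₀ x|) :=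
        ((tendsto_const_nhds.sub (hf₀ x)).abs)
      refine le_of_tendsto hT ?_
      filter_upwards [Filter.eventually_ge_atTop N] with m hm
      exact (hN n hn m hm x).le
    -- uniform convergence, continuity of the limit
    have hTU : TendstoUniformly (fun n x => u n x) f₀ Filter.atTop := by
      rw [Metric.tendstoUniformly_iff]
      intro ε hε
      obtain ⟨N, hN⟩ := est (ε / 2) (by positivity)
      filter_upwards [Filter.eventually_ge_atTop N] with n hn x
      rw [Real.dist_eq, abs_sub_comm]
      exact lt_of_le_of_lt (hN n hn x) (by linarith)
    have hcont : Continuous f₀ :=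
      hTU.continuous (Filter.Eventually.of_forall fun n => (u n).continuous).frequently
    refine ⟨⟨f₀, hcont⟩, ?_⟩
    rw [Metric.tendsto_atTop]
    intro ε hε
    obtain ⟨N, hN⟩ := est (min ε 1 / 2) (by positivity)
    refine ⟨N, fun n hn => ?_⟩
    have : d (u n) ⟨f₀, hcont⟩ ≤ min ε 1 / 2 :=
      Stmt11Aux.d_le _ _ (by positivity) fun x =>
        le_trans (min_le_right _ _) (hN n hn x)
    calc dist (u n) (⟨f₀, hcont⟩ : C(X, ℝ)) ≤ min ε 1 / 2 := this
      _ < min ε 1 := by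
          have : 0 < min ε 1 := lt_min hε one_pos
          linarith
      _ ≤ ε := min_le_left _ _
end

section
/- Let X be a topological space and (Y,d) a complete metric space. Then C(X,Y) with the graph topology is a Baire space: the intersection of countably many dense open subsets is dense. (More specifically, player α has a winning tactic in the strong Choquet game on C(X,Y) with the graph topology, given on a position (f, B(f,ε)) by responding with B(f, min(1,ε)/2).) -/
/-- The graph topology on `C(X,Y)`. -/
def graphTopY (X Y : Type*) [TopologicalSpace X] [MetricSpace Y] :
    TopologicalSpace C(X, Y) :=
  TopologicalSpace.generateFrom
    {S | ∃ (f : C(X, Y)) (ε : X → ℝ),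
      LowerSemicontinuous ε ∧ (∀ x, 0 < ε x) ∧ S = gball f ε}

section aux

variable {X : Type*} [TopologicalSpace X]

lemma lsc_sub_cont {ε d : X → ℝ} (hε : LowerSemicontinuous ε) (hd : Continuous d) :
    LowerSemicontinuous fun x => ε x - d x := by
  intro x y hy
  dsimp only at hy
  set r := ε x - d x - y with hr
  have hrpos : 0 < r := by simp only [hr]; linarith
  have h1 : ∀ᶠ z in nhds x, ε x - r / 2 < ε z := hε x _ (by linarith)
  have h2 : ∀ᶠ z in nhds x, d z < d x + r / 2 :=
    (hd.tendsto x).eventually (Filter.Tendsto.eventually_lt_const (by linarith) Filter.tendsto_id)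
  filter_upwards [h1, h2] with z h1 h2
  simp only [hr] at *
  linarith

lemma lsc_half {ε : X → ℝ} (hε : LowerSemicontinuous ε) :
    LowerSemicontinuous fun x => ε x / 2 := by
  intro x y hy
  filter_upwards [hε x (2 * y) (by linarith)] with z hz
  linarith

lemma lsc_min {ε δ : X → ℝ} (hε : LowerSemicontinuous ε) (hδ : LowerSemicontinuous δ) :
    LowerSemicontinuous fun x => min (ε x) (δ x) := by
  intro x y hy
  rcases lt_min_iff.1 hy with ⟨h1, h2⟩
  filter_upwards [hε x y h1, hδ x y h2] with z h1 h2
  exact lt_min h1 h2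

end aux

theorem stmt19 {X Y : Type*} [TopologicalSpace X] [MetricSpace Y] [CompleteSpace Y] :
    @BaireSpace C(X, Y) (graphTopY X Y) := by
  letI t : TopologicalSpace C(X, Y) := graphTopY X Y
  -- the gballs form a topological basis
  set S : Set (Set C(X, Y)) :=
    {S | ∃ (f : C(X, Y)) (ε : X → ℝ),
      LowerSemicontinuous ε ∧ (∀ x, 0 < ε x) ∧ S = gball f ε} with hS
  -- recentering lemma: a gball around any of its points inside a given gball
  have recenter : ∀ (f : C(X, Y)) (ε : X → ℝ), LowerSemicontinuous ε → (∀ x, 0 < ε x) →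
      ∀ g ∈ gball f ε, gball g (fun x => ε x - dist (f x) (g x)) ⊆ gball f ε := by
    intro f ε _ _ g hg h hh x
    have := hh x
    have := dist_triangle (f x) (g x) (h x)
    simp only at *
    linarith
  have hbasis : TopologicalSpace.IsTopologicalBasis S := by
    refine ⟨?_, ?_, rfl⟩
    · rintro t₁ ⟨f₁, ε₁, hl₁, hp₁, rfl⟩ t₂ ⟨f₂, ε₂, hl₂, hp₂, rfl⟩ g ⟨hg₁, hg₂⟩
      refine ⟨gball g (fun x => min (ε₁ x - dist (f₁ x) (g x)) (ε₂ x - dist (f₂ x) (g x))),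
        ⟨g, _, lsc_min (lsc_sub_cont hl₁ (f₁.continuous.dist g.continuous)) (lsc_sub_cont hl₂ (f₂.continuous.dist g.continuous)),
          fun x => lt_min (by have := hg₁ x; linarith)
            (by have := hg₂ x; linarith), rfl⟩, ?_, ?_⟩
      · intro x; simp only [dist_self]
        exact lt_min (by have := hg₁ x; linarith)
          (by have := hg₂ x; linarith)
      · intro h hh
        constructor
        · exact recenter f₁ ε₁ hl₁ hp₁ g hg₁ (fun x => (hh x).trans_le (min_le_left _ _)) 
        · exact recenter f₂ ε₂ hl₂ hp₂ g hg₂ (fun x => (hh x).trans_le (min_le_right _ _))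
    · apply Set.eq_univ_of_forall
      intro f
      exact ⟨gball f (fun _ => 1), ⟨f, _, lowerSemicontinuous_const, fun _ => one_pos, rfl⟩,
        fun x => by simp⟩
  have gball_open : ∀ (f : C(X, Y)) (ε : X → ℝ), LowerSemicontinuous ε → (∀ x, 0 < ε x) →
      IsOpen (gball f ε) := fun f ε hl hp => hbasis.isOpen ⟨f, ε, hl, hp, rfl⟩
  constructor
  intro U hUopen hUdense
  rw [dense_iff_inter_open]
  intro W hW ⟨g₀, hg₀⟩
  -- the subtype of "good" pairs
  set T := {p : C(X, Y) × (X → ℝ) // LowerSemicontinuous p.2 ∧ ∀ x, 0 < p.2 x} with hT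
  -- initial pair: a small gball inside W, with radius ≤ 1
  obtain ⟨V, ⟨f₀, ε₀', hl₀, hp₀, rfl⟩, hg₀V, hVW⟩ :=
    hbasis.exists_subset_of_mem_open hg₀ hW
  set ε₀ : X → ℝ := fun x => min (ε₀' x - dist (f₀ x) (g₀ x)) 1 with hε₀
  have hl₀' : LowerSemicontinuous ε₀ :=
    lsc_min (lsc_sub_cont hl₀ (f₀.continuous.dist g₀.continuous)) lowerSemicontinuous_const
  have hp₀' : ∀ x, 0 < ε₀ x := fun x =>
    lt_min (by have := hg₀V x; linarith) one_pos
  have h₀W : gball g₀ ε₀ ⊆ W :=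
    fun h hh => hVW (recenter f₀ ε₀' hl₀ hp₀ g₀ hg₀V
      (fun x => (hh x).trans_le (min_le_left _ _)))
  have h₀1 : ∀ x, ε₀ x ≤ 1 := fun x => min_le_right _ _
  -- step lemma
  have key : ∀ (n : ℕ) (p : T), ∃ q : T,
      gball q.1.1 q.1.2 ⊆ U n ∧
      (∀ x, dist (p.1.1 x) (q.1.1 x) + 2 * q.1.2 x ≤ p.1.2 x) := by
    rintro n ⟨⟨f, ε⟩, hl, hp⟩
    have hhalf_l : LowerSemicontinuous fun x => ε x / 2 := lsc_half hl
    have hhalf_p : ∀ x, 0 < ε x / 2 := fun x => by have := hp x; linarith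
    obtain ⟨g, hgB, hgU⟩ := dense_iff_inter_open.1 (hUdense n) _
      (gball_open f _ hhalf_l hhalf_p) ⟨f, fun x => by simpa using hhalf_p x⟩
    have hopen : IsOpen (U n ∩ gball f (fun x => ε x / 2)) :=
      (hUopen n).inter (gball_open f _ hhalf_l hhalf_p)
    obtain ⟨V, ⟨h, δ, hlδ, hpδ, rfl⟩, hgV, hVsub⟩ :=
      hbasis.exists_subset_of_mem_open (Set.mem_inter hgU hgB) hopen
    set ε' : X → ℝ := fun x =>
      min (δ x - dist (h x) (g x)) ((ε x / 2 - dist (f x) (g x)) / 2) with hε'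
    have hlε' : LowerSemicontinuous ε' :=
      lsc_min (lsc_sub_cont hlδ (h.continuous.dist g.continuous))
        (lsc_half (lsc_sub_cont hhalf_l (f.continuous.dist g.continuous)))
    have hpε' : ∀ x, 0 < ε' x := fun x => by
      have h1 := hgV x
      have h2 := hgB x
      simp only at h1 h2 ⊢
      exact lt_min (by linarith) (by linarith)
    refine ⟨⟨(g, ε'), hlε', hpε'⟩, ?_, ?_⟩
    · intro k hk
      exact (hVsub (recenter h δ hlδ hpδ g hgV
        (fun x => (hk x).trans_le (min_le_left _ _)))).1
    · intro x
      have h1 : ε' x ≤ (ε x / 2 - dist (f x) (g x)) / 2 := min_le_right _ _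
      have h2 := hp x
      have h3 := dist_nonneg (x := f x) (y := g x)
      simp only at *
      linarith
  -- build the sequence of shrinking gballs
  let p₀ : T := ⟨(g₀, ε₀), hl₀', hp₀'⟩
  let seq : ℕ → T := fun n => Nat.rec p₀ (fun n p => Classical.choose (key n p)) n
  have seq_succ : ∀ n, seq (n + 1) = Classical.choose (key n (seq n)) := fun n => rfl
  set fs : ℕ → C(X, Y) := fun n => (seq n).1.1 with hfs
  set es : ℕ → X → ℝ := fun n => (seq n).1.2 with hes
  have hlpos : ∀ n, LowerSemicontinuous (es n) ∧ ∀ x, 0 < es n x := fun n => (seq n).2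
  have hstep : ∀ n, gball (fs (n + 1)) (es (n + 1)) ⊆ U n ∧
      (∀ x, dist (fs n x) (fs (n + 1) x) + 2 * es (n + 1) x ≤ es n x) := by
    intro n
    have := Classical.choose_spec (key n (seq n))
    rw [← seq_succ n] at this
    exact this
  have hhalf : ∀ n x, es (n + 1) x ≤ es n x / 2 := by
    intro n x
    have h1 := (hstep n).2 x
    have h2 := dist_nonneg (x := fs n x) (y := fs (n + 1) x)
    linarith
  have hbound : ∀ n x, es n x ≤ (1 / 2) ^ n := by
    intro n
    induction n with
    | zero => intro x; rw [pow_zero]; exact h₀1 x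
    | succ n ih =>
      intro x
      have := hhalf n x
      have := ih x
      rw [pow_succ]
      linarith
  have hchain : ∀ n m x, n < m → dist (fs n x) (fs m x) + 2 * es m x ≤ es n x := by
    intro n m x hnm
    induction m, hnm using Nat.le_induction with
    | base => exact (hstep n).2 x
    | succ m hm ih =>
      have h1 := (hstep m).2 x
      have h2 := dist_triangle (fs n x) (fs m x) (fs (m + 1) x)
      have h3 := (hlpos m).2 x
      linarith
  -- the sequence is Cauchy at every point
  have hcau : ∀ x, CauchySeq fun n => fs n x := by
    intro x
    apply cauchySeq_of_le_geometric (1 / 2) 1 (by norm_num)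
    intro n
    have h1 := (hstep n).2 x
    have h2 := (hlpos (n + 1)).2 x
    have h3 := hbound n x
    simp only [one_mul]
    linarith
  choose F hF using fun x => cauchySeq_tendsto_of_complete (hcau x)
  -- distance estimates to the limit
  have hclose : ∀ n x, dist (fs n x) (F x) ≤ es n x := by
    intro n x
    refine le_of_tendsto (tendsto_const_nhds.dist (hF x)) ?_
    filter_upwards [Filter.eventually_ge_atTop n] with m hm
    rcases eq_or_lt_of_le hm with rfl | hlt
    · simpa using (hlpos n).2 x |>.le
    · have h1 := hchain n m x hlt
      have h2 := (hlpos m).2 x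
      linarith
  have hstrict : ∀ n x, dist (fs n x) (F x) < es n x := by
    intro n x
    have h1 := (hstep n).2 x
    have h2 := hclose (n + 1) x
    have h3 := dist_triangle (fs n x) (fs (n + 1) x) (F x)
    have h4 := (hlpos (n + 1)).2 x
    linarith
  -- the limit is continuous
  have huniform : TendstoUniformly (fun n x => fs n x) F Filter.atTop := by
    rw [Metric.tendstoUniformly_iff]
    intro r hr
    have : Filter.Tendsto (fun n : ℕ => ((1 : ℝ) / 2) ^ n) Filter.atTop (nhds 0) :=
      tendsto_pow_atTop_nhds_zero_of_lt_one (by norm_num) (by norm_num)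
    filter_upwards [this.eventually (Filter.Tendsto.eventually_lt_const hr
      Filter.tendsto_id)] with n hn x
    rw [dist_comm]
    exact lt_of_le_of_lt ((hclose n x).trans (hbound n x)) hn
  have hFcont : Continuous F :=
    huniform.continuous (Filter.Eventually.of_forall fun n => (fs n).continuous).frequently
  set Fc : C(X, Y) := ⟨F, hFcont⟩ with hFc
  refine ⟨Fc, ?_, ?_⟩
  · exact h₀W fun x => hstrict 0 x
  · rw [Set.mem_iInter]
    intro n
    exact (hstep n).1 fun x => hstrict (n + 1) x
end
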